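/- arXiv:2102.04145 — 3 statements merged into one kernel-verified Lean document; each statement's English description precedes it below -/
import Mathlib

section
/- Let X ~ N(μ_k, σ_k² I) on ℝ^d, and for i ≠ k let L_i be the Gaussian density with mean μ_i and covariance σ_i² I. If ‖μ_k - μ_i‖² ≥ d·(σ_k² + σ_i²)·ln(2σ_k²/(σ_k²+σ_i²)), then E[L_k(X)] ≥ E[L_i(X)]. -/
open MeasureTheory Real

/-- Density of the isotropic Gaussian `N(μ, σ² I)` on `ℝ^d`. -/
noncomputable def gaussDensity (d : ℕ) (μ : EuclideanSpace ℝ (Fin d)) (σ : ℝ) :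
    EuclideanSpace ℝ (Fin d) → ℝ :=
  fun x => (2 * π * σ ^ 2) ^ (-(d : ℝ) / 2) * Real.exp (-‖x - μ‖ ^ 2 / (2 * σ ^ 2))

lemma gauss_translate_integral (d : ℕ) {t : ℝ} (ht : 0 < t) (c : EuclideanSpace ℝ (Fin d)) :
    ∫ x : EuclideanSpace ℝ (Fin d), rexp (-t * ‖x - c‖ ^ 2) = (π / t) ^ ((d : ℝ) / 2) := by
  rw [integral_sub_right_eq_self (fun x => rexp (-t * ‖x‖ ^ 2)) c,
    GaussianFourier.integral_rexp_neg_mul_sq_norm ht, finrank_euclideanSpace_fin]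

lemma gauss_parallelogram (d : ℕ) (u v : EuclideanSpace ℝ (Fin d)) (A B : ℝ) :
    B * (A + B) * ‖u‖ ^ 2 + A * (A + B) * ‖v‖ ^ 2 = ‖B • u + A • v‖ ^ 2 + A * B * ‖u - v‖ ^ 2 := by
  simp only [← real_inner_self_eq_norm_sq, inner_add_left, inner_add_right, inner_sub_left,
    inner_sub_right, real_inner_smul_left, real_inner_smul_right]
  rw [real_inner_comm v u]
  ring

/-- The integral of a product of two isotropic Gaussian densities. -/
lemma gauss_prod_integral (d : ℕ) (a b : EuclideanSpace ℝ (Fin d)) (σa σb : ℝ)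
    (ha : 0 < σa) (hb : 0 < σb) :
    ∫ x, gaussDensity d a σa x * gaussDensity d b σb x
      = (2 * π * (σa ^ 2 + σb ^ 2)) ^ (-(d : ℝ) / 2)
        * Real.exp (-‖a - b‖ ^ 2 / (2 * (σa ^ 2 + σb ^ 2))) := by
  set A := σa ^ 2 with hA
  set B := σb ^ 2 with hB
  have hA0 : 0 < A := by positivity
  have hB0 : 0 < B := by positivity
  set s : ℝ := A + B with hs
  have hs0 : 0 < s := by positivity
  set t : ℝ := s / (2 * A * B) with ht
  have ht0 : 0 < t := by positivity
  set c : EuclideanSpace ℝ (Fin d) := s⁻¹ • (B • a + A • b) with hc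
  -- pointwise factorization
  have hpt : ∀ x, gaussDensity d a σa x * gaussDensity d b σb x
      = ((2 * π * A) ^ (-(d : ℝ) / 2) * (2 * π * B) ^ (-(d : ℝ) / 2)
          * Real.exp (-‖a - b‖ ^ 2 / (2 * s))) * rexp (-t * ‖x - c‖ ^ 2) := by
    intro x
    have hsc : s • (x - c) = B • (x - a) + A • (x - b) := by
      rw [hc, smul_sub, smul_smul, mul_inv_cancel₀ (ne_of_gt hs0), one_smul]
      rw [smul_sub, smul_sub, hs]
      module
    have hnorm : s ^ 2 * ‖x - c‖ ^ 2 = ‖B • (x - a) + A • (x - b)‖ ^ 2 := by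
      rw [← hsc, norm_smul, Real.norm_eq_abs, abs_of_pos hs0, mul_pow]
    have key := gauss_parallelogram d (x - a) (x - b) A B
    have hab : (x - a) - (x - b) = b - a := by abel
    rw [hab, ← hs, ← hnorm, norm_sub_rev b a] at key
    have hexp : -‖x - a‖ ^ 2 / (2 * A) + -‖x - b‖ ^ 2 / (2 * B)
        = -t * ‖x - c‖ ^ 2 + -‖a - b‖ ^ 2 / (2 * s) := by
      rw [ht]
      field_simp
      linear_combination (-1) * key
    simp only [gaussDensity, ← hA, ← hB]
    rw [show (2 * π * A) ^ (-(d : ℝ) / 2) * rexp (-‖x - a‖ ^ 2 / (2 * A))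
        * ((2 * π * B) ^ (-(d : ℝ) / 2) * rexp (-‖x - b‖ ^ 2 / (2 * B)))
        = (2 * π * A) ^ (-(d : ℝ) / 2) * (2 * π * B) ^ (-(d : ℝ) / 2)
          * (rexp (-‖x - a‖ ^ 2 / (2 * A)) * rexp (-‖x - b‖ ^ 2 / (2 * B))) by ring,
      ← Real.exp_add, hexp, Real.exp_add]
    ring
  rw [integral_congr_ae (Filter.Eventually.of_forall hpt), integral_const_mul,
    gauss_translate_integral d ht0 c]
  -- now simplify the constant
  have h2π : (0 : ℝ) < 2 * π := by positivity
  have hpit : π / t = (2 * π * s)⁻¹ * ((2 * π * A) * (2 * π * B)) := by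
    rw [ht]; field_simp
  have hApos : (0 : ℝ) < 2 * π * A := by positivity
  have hBpos : (0 : ℝ) < 2 * π * B := by positivity
  have hspos : (0 : ℝ) < 2 * π * s := by positivity
  have hconst : (2 * π * A) ^ (-(d : ℝ) / 2) * (2 * π * B) ^ (-(d : ℝ) / 2)
      * (π / t) ^ ((d : ℝ) / 2) = (2 * π * s) ^ (-(d : ℝ) / 2) := by
    have e1 : ((2 * π * s)⁻¹ * ((2 * π * A) * (2 * π * B))) ^ ((d : ℝ) / 2)
        = (2 * π * s) ^ (-((d : ℝ) / 2))
          * ((2 * π * A) ^ ((d : ℝ) / 2) * (2 * π * B) ^ ((d : ℝ) / 2)) := by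
      rw [Real.mul_rpow (by positivity) (by positivity),
        Real.mul_rpow (le_of_lt hApos) (le_of_lt hBpos),
        Real.inv_rpow (le_of_lt hspos), ← Real.rpow_neg (le_of_lt hspos)]
    rw [hpit, e1]
    simp only [neg_div]
    have h1 : (2 * π * A) ^ (-((d : ℝ) / 2)) * (2 * π * A) ^ ((d : ℝ) / 2) = 1 := by
      rw [← Real.rpow_add hApos]; simp
    have h2 : (2 * π * B) ^ (-((d : ℝ) / 2)) * (2 * π * B) ^ ((d : ℝ) / 2) = 1 := by
      rw [← Real.rpow_add hBpos]; simp
    calc (2 * π * A) ^ (-((d : ℝ) / 2)) * (2 * π * B) ^ (-((d : ℝ) / 2))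
          * ((2 * π * s) ^ (-((d : ℝ) / 2))
            * ((2 * π * A) ^ ((d : ℝ) / 2) * (2 * π * B) ^ ((d : ℝ) / 2)))
        = ((2 * π * A) ^ (-((d : ℝ) / 2)) * (2 * π * A) ^ ((d : ℝ) / 2))
          * ((2 * π * B) ^ (-((d : ℝ) / 2)) * (2 * π * B) ^ ((d : ℝ) / 2))
          * (2 * π * s) ^ (-((d : ℝ) / 2)) := by ring
      _ = (2 * π * s) ^ (-((d : ℝ) / 2)) := by rw [h1, h2, one_mul, one_mul]
  calc (2 * π * A) ^ (-(d : ℝ) / 2) * (2 * π * B) ^ (-(d : ℝ) / 2)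
        * rexp (-‖a - b‖ ^ 2 / (2 * s)) * (π / t) ^ ((d : ℝ) / 2)
      = ((2 * π * A) ^ (-(d : ℝ) / 2) * (2 * π * B) ^ (-(d : ℝ) / 2)
        * (π / t) ^ ((d : ℝ) / 2)) * rexp (-‖a - b‖ ^ 2 / (2 * s)) := by ring
    _ = (2 * π * s) ^ (-(d : ℝ) / 2) * rexp (-‖a - b‖ ^ 2 / (2 * s)) := by rw [hconst]

/-- Known-class separability condition of Theorem 3.1 (MLE): if
`‖μₖ - μᵢ‖² ≥ d (σₖ² + σᵢ²) ln(2σₖ²/(σₖ²+σᵢ²))` then `E[Lₖ(X)] ≥ E[Lᵢ(X)]`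
for `X ~ N(μₖ, σₖ² I)`. -/
theorem mle_known_class (d : ℕ) (hd : 1 ≤ d)
    (μk μi : EuclideanSpace ℝ (Fin d)) (σk σi : ℝ) (hσk : 0 < σk) (hσi : 0 < σi)
    (hsep : ‖μk - μi‖ ^ 2 ≥
      (d : ℝ) * (σk ^ 2 + σi ^ 2) * Real.log (2 * σk ^ 2 / (σk ^ 2 + σi ^ 2))) :
    ∫ x, gaussDensity d μk σk x * gaussDensity d μk σk x ≥
      ∫ x, gaussDensity d μi σi x * gaussDensity d μk σk x := by
  rw [gauss_prod_integral d μk μk σk σk hσk hσk, gauss_prod_integral d μi μk σi σk hσi hσk]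
  rw [add_comm (σk ^ 2) (σi ^ 2)] at hsep
  set s : ℝ := σi ^ 2 + σk ^ 2 with hs
  have hs0 : 0 < s := by positivity
  rw [sub_self, norm_zero, norm_sub_rev μi μk]
  norm_num
  -- goal: (2π(σk²+σk²))^(-d/2) ≥ (2πs)^(-d/2) * exp(-‖μk-μi‖²/(2s))
  have hr : (0 : ℝ) < 2 * σk ^ 2 / s := by positivity
  have hexp_le : rexp (-‖μk - μi‖ ^ 2 / (2 * s)) ≤ (2 * σk ^ 2 / s) ^ (-(d : ℝ) / 2) := by
    rw [Real.rpow_def_of_pos hr]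
    apply Real.exp_le_exp.mpr
    have h1 : Real.log (2 * σk ^ 2 / s) * (-(d : ℝ) / 2)
        = -((d : ℝ) * Real.log (2 * σk ^ 2 / s) / 2) := by ring
    rw [h1, neg_div, neg_le_neg_iff, div_le_div_iff₀ (by norm_num : (0:ℝ) < 2) (by positivity : (0:ℝ) < 2 * s)]
    nlinarith [hsep]
  have hkey : (2 * π * s) ^ (-(d : ℝ) / 2) * (2 * σk ^ 2 / s) ^ (-(d : ℝ) / 2)
      = (2 * π * (σk ^ 2 + σk ^ 2)) ^ (-(d : ℝ) / 2) := by
    rw [← Real.mul_rpow (by positivity) (by positivity)]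
    congr 1
    field_simp
    ring
  have hpos : (0 : ℝ) < (2 * π * s) ^ (-(d : ℝ) / 2) :=
    Real.rpow_pos_of_pos (by positivity) _
  calc (2 * π * s) ^ (-(d : ℝ) / 2) * rexp (-‖μk - μi‖ ^ 2 / (2 * s))
      ≤ (2 * π * s) ^ (-(d : ℝ) / 2) * (2 * σk ^ 2 / s) ^ (-(d : ℝ) / 2) :=
        mul_le_mul_of_nonneg_left hexp_le (le_of_lt hpos)
    _ = (2 * π * (σk ^ 2 + σk ^ 2)) ^ (-(d : ℝ) / 2) := hkey
end

section
/- Let X ~ N(μ_k, σ_k² I) on ℝ^d, and suppose classes X_1,…,X_m, X_u have Gaussian densities L_i with means μ_i and covariances σ_i² I, with weights P(X_i) ≥ 0 summing to 1 (indices in {1,…,m,u}). Define the mixture likelihood L_s(x) = Σ_i P(X_i) L_i(x). If for every index i, ‖μ_k - μ_i‖² ≥ d·(σ_k² + σ_i²)·ln(2σ_k²/(σ_k²+σ_i²)), then E[L_k(X)] ≥ E[L_s(X)]. -/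
open MeasureTheory Real

lemma norm_combo {V : Type*} [NormedAddCommGroup V] [InnerProductSpace ℝ V]
    (a b : ℝ) (hab : a + b ≠ 0) (x μ1 μ2 : V) :
    a * ‖x - μ1‖ ^ 2 + b * ‖x - μ2‖ ^ 2
      = (a + b) * ‖x - ((a / (a + b)) • μ1 + (b / (a + b)) • μ2)‖ ^ 2
        + (a * b / (a + b)) * ‖μ1 - μ2‖ ^ 2 := by
  simp only [← real_inner_self_eq_norm_sq, inner_sub_left, inner_sub_right, inner_add_left,
    inner_add_right, real_inner_smul_left, real_inner_smul_right,
    real_inner_comm x μ1, real_inner_comm x μ2, real_inner_comm μ2 μ1]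
  field_simp
  ring

section prod
variable {d : ℕ} (μ1 μ2 : EuclideanSpace ℝ (Fin d)) {σ1 σ2 : ℝ}

lemma integrable_rexp_norm {V : Type*} [NormedAddCommGroup V] [InnerProductSpace ℝ V]
    [FiniteDimensional ℝ V] [MeasurableSpace V] [BorelSpace V] {b : ℝ} (hb : 0 < b) :
    Integrable (fun v : V => rexp (-b * ‖v‖ ^ 2)) := by
  have h := GaussianFourier.integrable_cexp_neg_mul_sq_norm_add
    (V := V) (b := (b : ℂ)) (by simpa using hb) 0 0
  have := h.norm
  refine this.congr (Filter.Eventually.of_forall fun v => ?_)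
  simp [Complex.norm_exp]
  left; norm_cast

lemma gauss_prod_eq (h1 : 0 < σ1) (h2 : 0 < σ2) (x : EuclideanSpace ℝ (Fin d)) :
    gaussDensity d μ1 σ1 x * gaussDensity d μ2 σ2 x
      = ((2 * π * σ1 ^ 2) ^ (-(d : ℝ) / 2) * (2 * π * σ2 ^ 2) ^ (-(d : ℝ) / 2)
          * rexp (-(1 / (2 * σ1 ^ 2) * (1 / (2 * σ2 ^ 2))
              / (1 / (2 * σ1 ^ 2) + 1 / (2 * σ2 ^ 2))) * ‖μ1 - μ2‖ ^ 2))
        * rexp (-(1 / (2 * σ1 ^ 2) + 1 / (2 * σ2 ^ 2)) *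
            ‖x - ((1 / (2 * σ1 ^ 2) / (1 / (2 * σ1 ^ 2) + 1 / (2 * σ2 ^ 2))) • μ1
              + (1 / (2 * σ2 ^ 2) / (1 / (2 * σ1 ^ 2) + 1 / (2 * σ2 ^ 2))) • μ2)‖ ^ 2) := by
  set a := 1 / (2 * σ1 ^ 2) with ha
  set b := 1 / (2 * σ2 ^ 2) with hb
  have hapos : 0 < a := by positivity
  have hbpos : 0 < b := by positivity
  have hab : a + b ≠ 0 := by positivity
  have key := norm_combo a b hab x μ1 μ2
  unfold gaussDensity
  rw [mul_mul_mul_comm, ← Real.exp_add]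
  rw [show -‖x - μ1‖ ^ 2 / (2 * σ1 ^ 2) + -‖x - μ2‖ ^ 2 / (2 * σ2 ^ 2)
      = -(a * ‖x - μ1‖ ^ 2 + b * ‖x - μ2‖ ^ 2) by rw [ha, hb]; ring]
  rw [key]
  rw [neg_add (((a+b))*_), Real.exp_add]
  ring

lemma integrable_gauss_prod (h1 : 0 < σ1) (h2 : 0 < σ2) :
    Integrable (fun x => gaussDensity d μ1 σ1 x * gaussDensity d μ2 σ2 x) := by
  have hab : (0:ℝ) < 1 / (2 * σ1 ^ 2) + 1 / (2 * σ2 ^ 2) := by positivity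
  have := (((integrable_rexp_norm (V := EuclideanSpace ℝ (Fin d)) hab).comp_sub_right
      ((1 / (2 * σ1 ^ 2) / (1 / (2 * σ1 ^ 2) + 1 / (2 * σ2 ^ 2))) • μ1
        + (1 / (2 * σ2 ^ 2) / (1 / (2 * σ1 ^ 2) + 1 / (2 * σ2 ^ 2))) • μ2)).const_mul
      ((2 * π * σ1 ^ 2) ^ (-(d : ℝ) / 2) * (2 * π * σ2 ^ 2) ^ (-(d : ℝ) / 2)
          * rexp (-(1 / (2 * σ1 ^ 2) * (1 / (2 * σ2 ^ 2))
              / (1 / (2 * σ1 ^ 2) + 1 / (2 * σ2 ^ 2))) * ‖μ1 - μ2‖ ^ 2)))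
  exact this.congr (Filter.Eventually.of_forall fun x => (gauss_prod_eq μ1 μ2 h1 h2 x).symm)

lemma gauss_prod_integral_s5 (h1 : 0 < σ1) (h2 : 0 < σ2) :
    ∫ x, gaussDensity d μ1 σ1 x * gaussDensity d μ2 σ2 x
      = (2 * π * (σ1 ^ 2 + σ2 ^ 2)) ^ (-(d : ℝ) / 2)
          * rexp (-‖μ1 - μ2‖ ^ 2 / (2 * (σ1 ^ 2 + σ2 ^ 2))) := by
  have hab : (0:ℝ) < 1 / (2 * σ1 ^ 2) + 1 / (2 * σ2 ^ 2) := by positivity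
  simp only [gauss_prod_eq μ1 μ2 h1 h2]
  rw [MeasureTheory.integral_const_mul,
    MeasureTheory.integral_sub_right_eq_self
      (fun y => rexp (-(1 / (2 * σ1 ^ 2) + 1 / (2 * σ2 ^ 2)) * ‖y‖ ^ 2)) _,
    GaussianFourier.integral_rexp_neg_mul_sq_norm hab, finrank_euclideanSpace_fin]
  set e : ℝ := (d : ℝ) / 2 with he
  have hexp : -(1 / (2 * σ1 ^ 2) * (1 / (2 * σ2 ^ 2)) / (1 / (2 * σ1 ^ 2) + 1 / (2 * σ2 ^ 2)))
      = -(1 / (2 * (σ1 ^ 2 + σ2 ^ 2))) := by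
    field_simp; ring
  have hx : (0:ℝ) < 2 * π * σ1 ^ 2 := by positivity
  have hy : (0:ℝ) < 2 * π * σ2 ^ 2 := by positivity
  have hs : (0:ℝ) < 2 * π * (σ1 ^ 2 + σ2 ^ 2) := by positivity
  have hz : (0:ℝ) < π / (1 / (2 * σ1 ^ 2) + 1 / (2 * σ2 ^ 2)) := by positivity
  have hbase : (π / (1 / (2 * σ1 ^ 2) + 1 / (2 * σ2 ^ 2))) * (2 * π * (σ1 ^ 2 + σ2 ^ 2))
      = (2 * π * σ1 ^ 2) * (2 * π * σ2 ^ 2) := by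
    field_simp; ring
  have hpow : (π / (1 / (2 * σ1 ^ 2) + 1 / (2 * σ2 ^ 2))) ^ e * (2 * π * (σ1 ^ 2 + σ2 ^ 2)) ^ e
      = (2 * π * σ1 ^ 2) ^ e * (2 * π * σ2 ^ 2) ^ e := by
    rw [← Real.mul_rpow hz.le hs.le, hbase, Real.mul_rpow hx.le hy.le]
  have hne : -(d : ℝ) / 2 = -e := by rw [he]; ring
  rw [hexp, hne, Real.rpow_neg hx.le, Real.rpow_neg hy.le, Real.rpow_neg hs.le]
  rw [show -(1 / (2 * (σ1 ^ 2 + σ2 ^ 2))) * ‖μ1 - μ2‖ ^ 2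
      = -‖μ1 - μ2‖ ^ 2 / (2 * (σ1 ^ 2 + σ2 ^ 2)) by ring]
  have p1 := Real.rpow_pos_of_pos hx e
  have p2 := Real.rpow_pos_of_pos hy e
  have p3 := Real.rpow_pos_of_pos hs e
  have p4 := Real.rpow_pos_of_pos hz e
  have hE : (0:ℝ) < rexp (-‖μ1 - μ2‖ ^ 2 / (2 * (σ1 ^ 2 + σ2 ^ 2))) := Real.exp_pos _
  have hzz : (π / (1 / (2 * σ1 ^ 2) + 1 / (2 * σ2 ^ 2))) ^ e
      = (2 * π * σ1 ^ 2) ^ e * (2 * π * σ2 ^ 2) ^ e / (2 * π * (σ1 ^ 2 + σ2 ^ 2)) ^ e := by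
    rw [eq_div_iff p3.ne']; exact hpow
  rw [hzz]
  field_simp
end prod

lemma key_ineq (d : ℕ) {s t : ℝ} (hs : 0 < s) (ht : 0 < t) {Δ : ℝ}
    (hsep : Δ ≥ (d : ℝ) * (t + s) * Real.log (2 * t / (t + s))) :
    (2 * π * (s + t)) ^ (-(d : ℝ) / 2) * rexp (-Δ / (2 * (s + t)))
      ≤ (2 * π * (t + t)) ^ (-(d : ℝ) / 2) := by
  have hu : (0:ℝ) < s + t := by positivity
  have h1 : (0:ℝ) < 2 * π * (s + t) := by positivity
  have h2 : (0:ℝ) < 2 * π * (t + t) := by positivity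
  rw [Real.rpow_def_of_pos h1, Real.rpow_def_of_pos h2, ← Real.exp_add, Real.exp_le_exp]
  have hlog : Real.log (2 * π * (t + t)) - Real.log (2 * π * (s + t))
      = Real.log (2 * t / (t + s)) := by
    rw [← Real.log_div h2.ne' h1.ne']
    congr 1
    field_simp
    ring
  have hkey : ((d : ℝ) / 2) * Real.log (2 * t / (t + s)) ≤ Δ / (2 * (s + t)) := by
    rw [le_div_iff₀ (by positivity)]
    have : (d : ℝ) / 2 * Real.log (2 * t / (t + s)) * (2 * (s + t))
        = (d : ℝ) * (t + s) * Real.log (2 * t / (t + s)) := by ring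
    linarith [this, hsep]
  have h3 : Real.log (2 * π * (t + t)) * (-(d : ℝ) / 2)
      = Real.log (2 * π * (s + t)) * (-(d : ℝ) / 2)
        + Real.log (2 * t / (t + s)) * (-(d : ℝ) / 2) := by
    rw [← hlog]; ring
  rw [h3]
  refine add_le_add le_rfl ?_
  rw [neg_div, show Real.log (2 * t / (t + s)) * (-(d : ℝ) / 2)
      = -((d : ℝ) / 2 * Real.log (2 * t / (t + s))) by ring]
  exact neg_le_neg hkey

/-- Known-class case of Theorem 3.1 (MLE): the index type `Option (Fin m)` encodes the
classes `{1,…,m, u}`, where `none` is the u.u. class `u` and `some k` a known class.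
If every pair `(k, i)` satisfies the separability condition, then
`E[Lₖ(X)] ≥ E[L_s(X)]` for `X ~ N(μₖ, σₖ² I)`, where `L_s` is the mixture. -/
theorem mle_known_vs_mixture (d m : ℕ) (hd : 1 ≤ d)
    (μ : Option (Fin m) → EuclideanSpace ℝ (Fin d))
    (σ : Option (Fin m) → ℝ) (hσ : ∀ i, 0 < σ i)
    (P : Option (Fin m) → ℝ) (hP : ∀ i, 0 ≤ P i) (hPsum : ∑ i, P i = 1)
    (k : Fin m)
    (hsep : ∀ i, ‖μ (some k) - μ i‖ ^ 2 ≥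
      (d : ℝ) * ((σ (some k)) ^ 2 + (σ i) ^ 2) *
        Real.log (2 * (σ (some k)) ^ 2 / ((σ (some k)) ^ 2 + (σ i) ^ 2))) :
    ∫ x, gaussDensity d (μ (some k)) (σ (some k)) x *
        gaussDensity d (μ (some k)) (σ (some k)) x ≥
      ∫ x, (∑ i, P i * gaussDensity d (μ i) (σ i) x) *
        gaussDensity d (μ (some k)) (σ (some k)) x := by
  have hLHS := gauss_prod_integral_s5 (μ (some k)) (μ (some k)) (hσ (some k)) (hσ (some k))
  rw [ge_iff_le, hLHS, sub_self, norm_zero]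
  rw [show rexp (-(0:ℝ) ^ 2 / (2 * (σ (some k) ^ 2 + σ (some k) ^ 2))) = 1 by norm_num, mul_one]
  simp only [Finset.sum_mul, mul_assoc]
  rw [MeasureTheory.integral_finset_sum _ (fun i _ =>
    (integrable_gauss_prod (μ i) (μ (some k)) (hσ i) (hσ (some k))).const_mul (P i))]
  simp_rw [MeasureTheory.integral_const_mul]
  have hterm : ∀ i : Option (Fin m),
      ∫ x, gaussDensity d (μ i) (σ i) x * gaussDensity d (μ (some k)) (σ (some k)) x
        ≤ (2 * π * ((σ (some k)) ^ 2 + (σ (some k)) ^ 2)) ^ (-(d : ℝ) / 2) := by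
    intro i
    rw [gauss_prod_integral_s5 (μ i) (μ (some k)) (hσ i) (hσ (some k))]
    apply key_ineq d (pow_pos (hσ i) 2) (pow_pos (hσ (some k)) 2)
    rw [norm_sub_rev]
    exact hsep i
  calc ∑ i, P i * ∫ x, gaussDensity d (μ i) (σ i) x * gaussDensity d (μ (some k)) (σ (some k)) x
      ≤ ∑ i, P i * (2 * π * ((σ (some k)) ^ 2 + (σ (some k)) ^ 2)) ^ (-(d : ℝ) / 2) :=
        Finset.sum_le_sum fun i _ => mul_le_mul_of_nonneg_left (hterm i) (hP i)
    _ = (2 * π * ((σ (some k)) ^ 2 + (σ (some k)) ^ 2)) ^ (-(d : ℝ) / 2) := by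
        rw [← Finset.sum_mul, hPsum, one_mul]
    _ = (2 * (π * ((σ (some k)) ^ 2 + (σ (some k)) ^ 2))) ^ (-(d : ℝ) / 2) := by
        rw [mul_assoc]
end

section
/- Let X ~ N(μ_u, σ_u² I) on ℝ^d, with mixture L_s(x) = P(X_u) L_u(x) + Σ_{j=1}^m P(X_j) L_j(x) where L_j are isotropic Gaussian densities, weights are nonnegative and sum to 1. Fix k ∈ {1,…,m} with P(X_u) > 0 and P(X_k) < 1. If ‖μ_k - μ_u‖²/(σ_k² + σ_u²) ≥ 2·ln((1 - P(X_k))/P(X_u)) + d·ln(2σ_u²/(σ_k²+σ_u²)), then E[L_s(X)] ≥ E[L_k(X)]. -/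
open MeasureTheory Real

section Aux

open RealInnerProductSpace

variable {d : ℕ}

lemma aux_inner {a b : ℝ} (ha : 0 < a) (hb : 0 < b)
    (μ ν x : EuclideanSpace ℝ (Fin d)) :
    a * ‖x - μ‖ ^ 2 + b * ‖x - ν‖ ^ 2 =
      (a + b) * ‖x - (a + b)⁻¹ • (a • μ + b • ν)‖ ^ 2
        + (a * b / (a + b)) * ‖μ - ν‖ ^ 2 := by
  have hab : a + b ≠ 0 := by positivity
  have hn : ∀ z : EuclideanSpace ℝ (Fin d), ‖z‖ ^ 2 = ⟪z, z⟫ :=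
    fun z => (real_inner_self_eq_norm_sq z).symm
  simp only [hn, inner_sub_left, inner_sub_right, inner_add_left, inner_add_right,
    real_inner_smul_left, real_inner_smul_right]
  rw [real_inner_comm μ x, real_inner_comm ν x, real_inner_comm ν μ]
  field_simp
  ring

lemma integrable_gauss_shift {c : ℝ} (hc : 0 < c) (v : EuclideanSpace ℝ (Fin d)) :
    Integrable (fun x : EuclideanSpace ℝ (Fin d) => rexp (-(c * ‖x - v‖ ^ 2))) := by
  have h0 : Integrable (fun x : EuclideanSpace ℝ (Fin d) => rexp (-(c * ‖x‖ ^ 2))) := by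
    have := (GaussianFourier.integrable_cexp_neg_mul_sq_norm_add
      (V := EuclideanSpace ℝ (Fin d)) (b := (c : ℂ)) (by simpa using hc) 0 0).re
    refine this.congr (Filter.Eventually.of_forall fun x => ?_)
    simp [Complex.exp_ofReal_re, ← Complex.ofReal_pow, ← Complex.ofReal_mul,
      ← Complex.ofReal_neg]
  exact h0.comp_sub_right v

lemma integral_gauss_shift {c : ℝ} (hc : 0 < c) (v : EuclideanSpace ℝ (Fin d)) :
    ∫ x : EuclideanSpace ℝ (Fin d), rexp (-(c * ‖x - v‖ ^ 2)) = (π / c) ^ ((d : ℝ) / 2) := by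
  have h1 : ∫ x : EuclideanSpace ℝ (Fin d), rexp (-(c * ‖x - v‖ ^ 2))
      = ∫ x : EuclideanSpace ℝ (Fin d), rexp (-(c * ‖x‖ ^ 2)) := by
    rw [← integral_add_right_eq_self
      (fun x : EuclideanSpace ℝ (Fin d) => rexp (-(c * ‖x - v‖ ^ 2))) v]
    simp
  rw [h1]
  have := GaussianFourier.integral_rexp_neg_mul_sq_norm
    (V := EuclideanSpace ℝ (Fin d)) hc
  simpa [neg_mul, finrank_euclideanSpace_fin] using this

lemma gauss_prod_eq_s6 (μ ν : EuclideanSpace ℝ (Fin d)) {s t : ℝ} (hs : 0 < s) (ht : 0 < t)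
    (x : EuclideanSpace ℝ (Fin d)) :
    gaussDensity d μ s x * gaussDensity d ν t x =
      ((2 * π * s ^ 2) ^ (-(d : ℝ) / 2) * (2 * π * t ^ 2) ^ (-(d : ℝ) / 2) *
          rexp (-(((2 * s ^ 2)⁻¹ * (2 * t ^ 2)⁻¹ / ((2 * s ^ 2)⁻¹ + (2 * t ^ 2)⁻¹)) *
            ‖μ - ν‖ ^ 2))) *
        rexp (-(((2 * s ^ 2)⁻¹ + (2 * t ^ 2)⁻¹) *
          ‖x - ((2 * s ^ 2)⁻¹ + (2 * t ^ 2)⁻¹)⁻¹ •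
            ((2 * s ^ 2)⁻¹ • μ + (2 * t ^ 2)⁻¹ • ν)‖ ^ 2)) := by
  have ha : (0 : ℝ) < (2 * s ^ 2)⁻¹ := by positivity
  have hb : (0 : ℝ) < (2 * t ^ 2)⁻¹ := by positivity
  have key := aux_inner ha hb μ ν x
  simp only [gaussDensity]
  rw [show -‖x - μ‖ ^ 2 / (2 * s ^ 2) = -((2 * s ^ 2)⁻¹ * ‖x - μ‖ ^ 2) by ring,
    show -‖x - ν‖ ^ 2 / (2 * t ^ 2) = -((2 * t ^ 2)⁻¹ * ‖x - ν‖ ^ 2) by ring,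
    mul_mul_mul_comm, ← Real.exp_add,
    show -((2 * s ^ 2)⁻¹ * ‖x - μ‖ ^ 2) + -((2 * t ^ 2)⁻¹ * ‖x - ν‖ ^ 2)
      = -((2 * s ^ 2)⁻¹ * ‖x - μ‖ ^ 2 + (2 * t ^ 2)⁻¹ * ‖x - ν‖ ^ 2) by ring,
    key, neg_add, Real.exp_add]
  ring

lemma gauss_prod_integrable (μ ν : EuclideanSpace ℝ (Fin d)) {s t : ℝ}
    (hs : 0 < s) (ht : 0 < t) :
    Integrable (fun x => gaussDensity d μ s x * gaussDensity d ν t x) := by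
  have hab : (0 : ℝ) < (2 * s ^ 2)⁻¹ + (2 * t ^ 2)⁻¹ := by positivity
  simp_rw [gauss_prod_eq_s6 μ ν hs ht]
  exact (integrable_gauss_shift hab _).const_mul _

lemma rpow_helper {A B C D : ℝ} (hA : 0 < A) (hB : 0 < B) (hC : 0 < C) (hD : 0 < D)
    (h : C * D = A * B) (e : ℝ) : A ^ (-e) * B ^ (-e) * C ^ e = D ^ (-e) := by
  rw [← Real.mul_rpow hA.le hB.le, ← h, Real.mul_rpow hC.le hD.le, Real.rpow_neg hC.le]
  have : C ^ e ≠ 0 := ne_of_gt (Real.rpow_pos_of_pos hC e)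
  field_simp

lemma gauss_prod_integral_s6 (μ ν : EuclideanSpace ℝ (Fin d)) {s t : ℝ}
    (hs : 0 < s) (ht : 0 < t) :
    ∫ x, gaussDensity d μ s x * gaussDensity d ν t x =
      (2 * π * (s ^ 2 + t ^ 2)) ^ (-(d : ℝ) / 2) *
        rexp (-(‖μ - ν‖ ^ 2 / (2 * (s ^ 2 + t ^ 2)))) := by
  have hπ := Real.pi_pos
  have ha : (0 : ℝ) < (2 * s ^ 2)⁻¹ := by positivity
  have hb : (0 : ℝ) < (2 * t ^ 2)⁻¹ := by positivity
  have hab : (0 : ℝ) < (2 * s ^ 2)⁻¹ + (2 * t ^ 2)⁻¹ := by positivity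
  simp_rw [gauss_prod_eq_s6 μ ν hs ht]
  rw [integral_const_mul, integral_gauss_shift hab]
  have hdiv : π / ((2 * s ^ 2)⁻¹ + (2 * t ^ 2)⁻¹)
      = 2 * π * s ^ 2 * t ^ 2 / (s ^ 2 + t ^ 2) := by
    field_simp
    ring
  have hcd : 2 * π * s ^ 2 * t ^ 2 / (s ^ 2 + t ^ 2) * (2 * π * (s ^ 2 + t ^ 2))
      = 2 * π * s ^ 2 * (2 * π * t ^ 2) := by
    field_simp
  have hrp := rpow_helper (by positivity : (0:ℝ) < 2 * π * s ^ 2)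
    (by positivity : (0:ℝ) < 2 * π * t ^ 2)
    (by positivity : (0:ℝ) < 2 * π * s ^ 2 * t ^ 2 / (s ^ 2 + t ^ 2))
    (by positivity : (0:ℝ) < 2 * π * (s ^ 2 + t ^ 2)) hcd ((d : ℝ) / 2)
  have hexp : (2 * s ^ 2)⁻¹ * (2 * t ^ 2)⁻¹ / ((2 * s ^ 2)⁻¹ + (2 * t ^ 2)⁻¹)
      = (2 * (s ^ 2 + t ^ 2))⁻¹ := by
    field_simp
    ring
  rw [hdiv, hexp, show -(d : ℝ) / 2 = -((d : ℝ) / 2) by ring] at *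
  rw [show ((2 * (s ^ 2 + t ^ 2))⁻¹ * ‖μ - ν‖ ^ 2) = ‖μ - ν‖ ^ 2 / (2 * (s ^ 2 + t ^ 2)) by
    ring]
  rw [← hrp]
  ring

end Aux

/-- Unknown-class case of Theorem 3.1 (MLE): the index type `Option (Fin m)` encodes the
classes `{1,…,m, u}`, where `none` is the u.u. class `u`. For `X ~ N(μᵤ, σᵤ² I)` and
mixture `L_s = Σ P(Xᵢ) Lᵢ`, under the stated separability condition,
`E[L_s(X)] ≥ E[Lₖ(X)]`. -/
theorem mle_unknown_class (d m : ℕ) (hd : 1 ≤ d)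
    (μ : Option (Fin m) → EuclideanSpace ℝ (Fin d))
    (σ : Option (Fin m) → ℝ) (hσ : ∀ i, 0 < σ i)
    (P : Option (Fin m) → ℝ) (hP : ∀ i, 0 ≤ P i) (hPsum : ∑ i, P i = 1)
    (k : Fin m) (hPu : 0 < P none) (hPk : P (some k) < 1)
    (hsep : ‖μ (some k) - μ none‖ ^ 2 / ((σ (some k)) ^ 2 + (σ none) ^ 2) ≥
      2 * Real.log ((1 - P (some k)) / P none) +
        (d : ℝ) * Real.log (2 * (σ none) ^ 2 / ((σ (some k)) ^ 2 + (σ none) ^ 2))) :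
    ∫ x, (∑ i, P i * gaussDensity d (μ i) (σ i) x) *
        gaussDensity d (μ none) (σ none) x ≥
      ∫ x, gaussDensity d (μ (some k)) (σ (some k)) x *
        gaussDensity d (μ none) (σ none) x := by
  have hπ := Real.pi_pos
  set C : Option (Fin m) → ℝ := fun i =>
    (2 * π * ((σ i) ^ 2 + (σ none) ^ 2)) ^ (-(d : ℝ) / 2) *
      rexp (-(‖μ i - μ none‖ ^ 2 / (2 * ((σ i) ^ 2 + (σ none) ^ 2)))) with hC
  have hval : ∀ i, ∫ x, gaussDensity d (μ i) (σ i) x * gaussDensity d (μ none) (σ none) x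
      = C i := fun i => gauss_prod_integral_s6 _ _ (hσ i) (hσ none)
  have hint : ∀ i, Integrable
      (fun x => gaussDensity d (μ i) (σ i) x * gaussDensity d (μ none) (σ none) x) :=
    fun i => gauss_prod_integrable _ _ (hσ i) (hσ none)
  have hCpos : ∀ i, 0 < C i := fun i => by
    have : (0:ℝ) < 2 * π * ((σ i) ^ 2 + (σ none) ^ 2) := by
      have := hσ i; have := hσ none; positivity
    exact mul_pos (Real.rpow_pos_of_pos this _) (Real.exp_pos _)
  -- rewrite LHS as a sum
  have hLHS : ∫ x, (∑ i, P i * gaussDensity d (μ i) (σ i) x) *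
      gaussDensity d (μ none) (σ none) x = ∑ i, P i * C i := by
    have heq : (fun x => (∑ i, P i * gaussDensity d (μ i) (σ i) x) *
        gaussDensity d (μ none) (σ none) x) = fun x =>
        ∑ i, P i * (gaussDensity d (μ i) (σ i) x * gaussDensity d (μ none) (σ none) x) := by
      funext x
      rw [Finset.sum_mul]
      exact Finset.sum_congr rfl fun i _ => by ring
    rw [heq, integral_finset_sum _ (fun i _ => (hint i).const_mul (P i))]
    exact Finset.sum_congr rfl fun i _ => by rw [integral_const_mul, hval i]
  rw [hval (some k), hLHS]
  -- reduce to two terms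
  have htwo : P none * C none + P (some k) * C (some k) ≤ ∑ i, P i * C i := by
    have hsub : ({none, some k} : Finset (Option (Fin m))) ⊆ Finset.univ :=
      Finset.subset_univ _
    have h2 : ∑ i ∈ ({none, some k} : Finset (Option (Fin m))), P i * C i
        = P none * C none + P (some k) * C (some k) := by
      rw [Finset.sum_insert (by simp), Finset.sum_singleton]
    rw [← h2]
    exact Finset.sum_le_sum_of_subset_of_nonneg hsub
      (fun i _ _ => mul_nonneg (hP i) (hCpos i).le)
  -- the key inequality
  set s : ℝ := (σ (some k)) ^ 2 + (σ none) ^ 2 with hs_def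
  have hs : 0 < s := by have := hσ (some k); have := hσ none; positivity
  have hσu : (0:ℝ) < (σ none) ^ 2 := by have := hσ none; positivity
  have hpk : 0 < 1 - P (some k) := by linarith
  set Δ : ℝ := ‖μ (some k) - μ none‖ ^ 2 with hΔ_def
  set r : ℝ := 2 * (σ none) ^ 2 / s with hr_def
  have hr : 0 < r := by positivity
  have hkey : (1 - P (some k)) * C (some k) ≤ P none * C none := by
    have hCnone : C none = (2 * π * s) ^ (-(d : ℝ) / 2) * r ^ (-(d : ℝ) / 2) := by
      have hmul : 2 * π * ((σ none) ^ 2 + (σ none) ^ 2) = (2 * π * s) * r := by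
        rw [hr_def]; field_simp; ring
      rw [hC]
      simp only [sub_self, norm_zero]
      rw [hmul, Real.mul_rpow (by positivity) hr.le]
      norm_num
    have hCk : C (some k) = (2 * π * s) ^ (-(d : ℝ) / 2) * rexp (-(Δ / (2 * s))) := rfl
    rw [hCnone, hCk]
    have hmain : (1 - P (some k)) * rexp (-(Δ / (2 * s))) ≤ P none * r ^ (-(d : ℝ) / 2) := by
      have e1 : P none * r ^ (-(d : ℝ) / 2)
          = rexp (Real.log (P none) + Real.log r * (-(d : ℝ) / 2)) := by
        rw [Real.exp_add, Real.exp_log hPu, ← Real.rpow_def_of_pos hr]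
      have e2 : (1 - P (some k)) * rexp (-(Δ / (2 * s)))
          = rexp (Real.log (1 - P (some k)) + -(Δ / (2 * s))) := by
        rw [Real.exp_add, Real.exp_log hpk]
      rw [e1, e2, Real.exp_le_exp]
      have hlog : Real.log ((1 - P (some k)) / P none)
          = Real.log (1 - P (some k)) - Real.log (P none) :=
        Real.log_div (ne_of_gt hpk) (ne_of_gt hPu)
      rw [hlog] at hsep
      have h2s : Δ / (2 * s) = (Δ / s) / 2 := by rw [div_div, mul_comm]
      rw [h2s]
      nlinarith [hsep]
    calc (1 - P (some k)) * ((2 * π * s) ^ (-(d : ℝ) / 2) * rexp (-(Δ / (2 * s))))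
        = (2 * π * s) ^ (-(d : ℝ) / 2) * ((1 - P (some k)) * rexp (-(Δ / (2 * s)))) := by
          ring
      _ ≤ (2 * π * s) ^ (-(d : ℝ) / 2) * (P none * r ^ (-(d : ℝ) / 2)) :=
          mul_le_mul_of_nonneg_left hmain (Real.rpow_pos_of_pos (by positivity) _).le
      _ = P none * ((2 * π * s) ^ (-(d : ℝ) / 2) * r ^ (-(d : ℝ) / 2)) := by ring
  have : C (some k) ≤ P none * C none + P (some k) * C (some k) := by nlinarith [hCpos (some k)]
  linarith
end
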